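/- For every natural number m, the cardinality of V_m equals 2·(4^m + 1); equivalently, the cardinality of V_m \ V_0 is 2·(4^m − 1). -/
import Mathlib


/-- The vertex sets of the graph approximations of the Sierpiński tetrahedron:
`V 0 = {P 0, P 1, P 2, P 3}` and `V (m+1) = ⋃ i, f i '' (V m)`, where
`f i x = (x + P i)/2`. -/
def sierpinskiVertices (P : Fin 4 → EuclideanSpace ℝ (Fin 3)) :
    ℕ → Set (EuclideanSpace ℝ (Fin 3))
  | 0 => Set.range P
  | m + 1 => ⋃ i, (fun x => (1 / 2 : ℝ) • (x + P i)) '' sierpinskiVertices P m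

section SierpinskiAux

open RealInnerProductSpace

variable {P : Fin 4 → EuclideanSpace ℝ (Fin 3)}

lemma sier_key (hreg : ∀ i j, i ≠ j → dist (P i) (P j) = 1)
    (d : Fin 4 → ℝ) (hsum : ∑ i, d i = 0)
    (hcomb : ∑ i, d i • P i = 0) : ∀ i, d i = 0 := by
  have hnorm : ∀ i j, i ≠ j → ‖P i - P j‖ = 1 := by
    intro i j h; rw [← dist_eq_norm]; exact hreg i j h
  have hsq : ∀ i j : Fin 4, i ≠ j → ⟪P i - P j, P i - P j⟫ = 1 := by
    intro i j h
    rw [real_inner_self_eq_norm_sq, hnorm i j h]; norm_num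
  have hip : ∀ i j : Fin 4, i ≠ 0 → j ≠ 0 → i ≠ j →
      ⟪P i - P 0, P j - P 0⟫ = 1/2 := by
    intro i j hi hj hij
    have h1 := hsq i 0 hi
    have h2 := hsq j 0 hj
    have h3 : ‖(P i - P 0) - (P j - P 0)‖ = 1 := by
      have : (P i - P 0) - (P j - P 0) = P i - P j := by abel
      rw [this]; exact hnorm i j hij
    have h4 : ‖(P i - P 0) - (P j - P 0)‖^2 = ‖P i - P 0‖^2 - 2 * ⟪P i - P 0, P j - P 0⟫ + ‖P j - P 0‖^2 :=
      norm_sub_sq_real _ _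
    rw [h3] at h4
    rw [real_inner_self_eq_norm_sq] at h1 h2
    nlinarith
  have h1 : d 0 + d 1 + d 2 + d 3 = 0 := by
    rw [Fin.sum_univ_four] at hsum; linarith
  rw [Fin.sum_univ_four] at hcomb
  have hv : d 1 • (P 1 - P 0) + d 2 • (P 2 - P 0) + d 3 • (P 3 - P 0) = 0 := by
    have h0 : d 0 = -(d 1 + d 2 + d 3) := by linarith
    rw [h0] at hcomb
    rw [← hcomb]; module
  have e : ∀ j : Fin 4, j ≠ 0 →
      d 1 * ⟪P 1 - P 0, P j - P 0⟫ + d 2 * ⟪P 2 - P 0, P j - P 0⟫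
        + d 3 * ⟪P 3 - P 0, P j - P 0⟫ = 0 := by
    intro j hj
    have h0 : ⟪d 1 • (P 1 - P 0) + d 2 • (P 2 - P 0) + d 3 • (P 3 - P 0), P j - P 0⟫ = (0:ℝ) := by
      rw [hv, inner_zero_left]
    rw [inner_add_left, inner_add_left, real_inner_smul_left, real_inner_smul_left,
      real_inner_smul_left] at h0
    exact h0
  have e1 := e 1 (by decide)
  have e2 := e 2 (by decide)
  have e3 := e 3 (by decide)
  rw [hsq 1 0 (by decide), hip 2 1 (by decide) (by decide) (by decide),
    hip 3 1 (by decide) (by decide) (by decide)] at e1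
  rw [hip 1 2 (by decide) (by decide) (by decide), hsq 2 0 (by decide),
    hip 3 2 (by decide) (by decide) (by decide)] at e2
  rw [hip 1 3 (by decide) (by decide) (by decide), hip 2 3 (by decide) (by decide) (by decide),
    hsq 3 0 (by decide)] at e3
  intro i
  fin_cases i <;> simp <;> linarith

/-- Uniqueness of barycentric coordinates. -/
lemma sier_uniq (hreg : ∀ i j, i ≠ j → dist (P i) (P j) = 1)
    (w w' : Fin 4 → ℝ) (hw : ∑ i, w i = 1) (hw' : ∑ i, w' i = 1)
    (h : ∑ i, w i • P i = ∑ i, w' i • P i) : w = w' := by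
  funext i
  have := sier_key hreg (fun k => w k - w' k)
    (by rw [Finset.sum_sub_distrib, hw, hw', sub_self])
    (by simp only [sub_smul, Finset.sum_sub_distrib, h, sub_self]) i
  linarith

/-- Image under `f i` in barycentric coordinates. -/
lemma sier_step_val (P : Fin 4 → EuclideanSpace ℝ (Fin 3)) (i : Fin 4) (u : Fin 4 → ℝ) :
    (1/2 : ℝ) • ((∑ k, u k • P k) + P i)
      = ∑ k, (u k / 2 + (if k = i then (1/2:ℝ) else 0)) • P k := by
  simp only [add_smul, Finset.sum_add_distrib, ite_smul, zero_smul, Finset.sum_ite_eq',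
    Finset.mem_univ, if_true, smul_add, Finset.smul_sum, smul_smul]
  congr 1
  apply Finset.sum_congr rfl
  intro k _
  congr 1
  ring

lemma sier_step_sum (i : Fin 4) (u : Fin 4 → ℝ) (hu : ∑ k, u k = 1) :
    ∑ k, (u k / 2 + (if k = i then (1/2:ℝ) else 0)) = 1 := by
  rw [Finset.sum_add_distrib, ← Finset.sum_div, hu, Finset.sum_ite_eq']
  norm_num


lemma sier_bar (P : Fin 4 → EuclideanSpace ℝ (Fin 3)) :
    ∀ m, ∀ x ∈ sierpinskiVertices P m, ∃ w : Fin 4 → ℝ,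
      (∀ i, 0 ≤ w i) ∧ ∑ i, w i = 1 ∧ x = ∑ i, w i • P i := by
  intro m
  induction m with
  | zero =>
    rintro x ⟨i, rfl⟩
    refine ⟨fun k => if k = i then 1 else 0, fun k => by positivity, ?_, ?_⟩
    · simp [Finset.sum_ite_eq']
    · simp [ite_smul, Finset.sum_ite_eq']
  | succ m ih =>
    rintro x hx
    rw [sierpinskiVertices, Set.mem_iUnion] at hx
    obtain ⟨i, y, hy, rfl⟩ := hx
    obtain ⟨u, hu0, hu1, rfl⟩ := ih y hy
    exact ⟨fun k => u k / 2 + (if k = i then (1/2:ℝ) else 0),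
      fun k => by have := hu0 k; positivity,
      sier_step_sum i u hu1, sier_step_val P i u⟩

lemma sier_V0_subset (P : Fin 4 → EuclideanSpace ℝ (Fin 3)) :
    ∀ m, sierpinskiVertices P 0 ⊆ sierpinskiVertices P m := by
  intro m
  induction m with
  | zero => exact subset_rfl
  | succ m ih =>
    rintro x ⟨i, rfl⟩
    rw [sierpinskiVertices, Set.mem_iUnion]
    refine ⟨i, P i, ih ⟨i, rfl⟩, ?_⟩
    show (1/2 : ℝ) • (P i + P i) = P i
    rw [← two_smul ℝ, smul_smul]
    norm_num

lemma sier_finite (P : Fin 4 → EuclideanSpace ℝ (Fin 3)) :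
    ∀ m, (sierpinskiVertices P m).Finite := by
  intro m
  induction m with
  | zero => exact Set.finite_range P
  | succ m ih => exact Set.finite_iUnion fun i => ih.image _

lemma sier_f_inj (P : Fin 4 → EuclideanSpace ℝ (Fin 3)) (i : Fin 4) :
    Function.Injective (fun x : EuclideanSpace ℝ (Fin 3) => (1/2 : ℝ) • (x + P i)) := by
  intro x y h
  simp only at h
  have := smul_right_injective (EuclideanSpace ℝ (Fin 3)) (by norm_num : (1/2:ℝ) ≠ 0) h
  exact add_right_cancel this

/-- The intersection of two distinct cell images is the corresponding midpoint. -/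
lemma sier_inter (hreg : ∀ i j, i ≠ j → dist (P i) (P j) = 1)
    (i j : Fin 4) (hij : i ≠ j) (m : ℕ) :
    ((fun x => (1/2 : ℝ) • (x + P i)) '' sierpinskiVertices P m) ∩
      ((fun x => (1/2 : ℝ) • (x + P j)) '' sierpinskiVertices P m)
      = {(1/2 : ℝ) • (P i + P j)} := by
  ext x
  constructor
  · rintro ⟨⟨y, hy, rfl⟩, ⟨z, hz, hzx⟩⟩
    obtain ⟨u, hu0, hu1, rfl⟩ := sier_bar P m y hy
    obtain ⟨v, hv0, hv1, rfl⟩ := sier_bar P m z hz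
    simp only at hzx
    rw [sier_step_val P i u, sier_step_val P j v] at hzx
    show (1/2 : ℝ) • ((∑ k, u k • P k) + P i) ∈ _
    rw [sier_step_val P i u]
    have huv := sier_uniq hreg _ _ (sier_step_sum j v hv1) (sier_step_sum i u hu1) hzx
    have hat : ∀ k, v k / 2 + (if k = j then (1/2:ℝ) else 0)
        = u k / 2 + (if k = i then (1/2:ℝ) else 0) := fun k => congrFun huv k
    have hbj := hat j
    have hbi := hat i
    rw [if_pos rfl, if_neg hij.symm] at hbj
    rw [if_neg hij, if_pos rfl] at hbi
    have huj_le : u j ≤ 1 := hu1 ▸ Finset.single_le_sum (fun k _ => hu0 k) (Finset.mem_univ j)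
    have hvi_le : v i ≤ 1 := hv1 ▸ Finset.single_le_sum (fun k _ => hv0 k) (Finset.mem_univ i)
    have huj : u j = 1 := by have := hv0 j; linarith
    have hui : u i = 0 := by have := hu0 i; linarith
    have hu_other : ∀ k, k ≠ j → u k = 0 := by
      intro k hk
      have hsub : ({k, j} : Finset (Fin 4)).sum u ≤ ∑ l, u l :=
        Finset.sum_le_sum_of_subset_of_nonneg (Finset.subset_univ _)
          (fun l _ _ => hu0 l)
      rw [Finset.sum_pair hk, hu1] at hsub
      have := hu0 k
      linarith
    have hw : ∀ k, u k / 2 + (if k = i then (1/2:ℝ) else 0)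
        = (if k = i then (1/2:ℝ) else 0) + (if k = j then (1/2:ℝ) else 0) := by
      intro k
      by_cases hki : k = i
      · subst hki; simp [hui, hij]
      · by_cases hkj : k = j
        · subst hkj; simp [huj, hki]
        · simp [hki, hkj, hu_other k hkj]
    have hsum_eq : ∑ k, (u k / 2 + (if k = i then (1/2:ℝ) else 0)) • P k
        = ∑ k, ((if k = i then (1/2:ℝ) else 0) + (if k = j then (1/2:ℝ) else 0)) • P k :=
      Finset.sum_congr rfl fun k _ => by rw [hw k]
    rw [Set.mem_singleton_iff, hsum_eq]
    simp only [add_smul, Finset.sum_add_distrib, ite_smul, zero_smul, Finset.sum_ite_eq',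
      Finset.mem_univ, if_true, smul_add]
  · rintro rfl
    constructor
    · exact ⟨P j, sier_V0_subset P m ⟨j, rfl⟩, by simp only []; rw [add_comm]⟩
    · exact ⟨P i, sier_V0_subset P m ⟨i, rfl⟩, rfl⟩

/-- Distinct midpoints. -/
lemma sier_mid_ne (hreg : ∀ i j, i ≠ j → dist (P i) (P j) = 1)
    (i j k l : Fin 4) (hij : i ≠ j) (hkl : k ≠ l) (hik : i ≠ k) (hil : i ≠ l) :
    (1/2 : ℝ) • (P i + P j) ≠ (1/2 : ℝ) • (P k + P l) := by
  intro h
  have hval : ∀ a b : Fin 4,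
      ∑ c, ((if c = a then (1/2:ℝ) else 0) + (if c = b then (1/2:ℝ) else 0)) • P c
        = (1/2 : ℝ) • (P a + P b) := by
    intro a b
    simp only [add_smul, Finset.sum_add_distrib, ite_smul, zero_smul, Finset.sum_ite_eq',
      Finset.mem_univ, if_true, smul_add]
  have hsum : ∀ a b : Fin 4, a ≠ b →
      ∑ c, ((if c = a then (1/2:ℝ) else 0) + (if c = b then (1/2:ℝ) else 0)) = 1 := by
    intro a b hab
    rw [Finset.sum_add_distrib, Finset.sum_ite_eq', Finset.sum_ite_eq']
    norm_num
  have := sier_uniq hreg _ _ (hsum i j hij) (hsum k l hkl)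
    (by rw [hval, hval, h])
  have hi := congrFun this i
  rw [if_pos rfl, if_neg hik, if_neg hil] at hi
  by_cases hji : i = j
  · exact hij hji
  · rw [if_neg hji] at hi; norm_num at hi


end SierpinskiAux

/-- For every `m`, the cardinality of `V m` equals `2 * (4 ^ m + 1)`;
equivalently, the cardinality of `V m \ V 0` is `2 * (4 ^ m - 1)`. -/
theorem sierpinski_tetrahedron_vertex_count
    (P : Fin 4 → EuclideanSpace ℝ (Fin 3))
    (hreg : ∀ i j, i ≠ j → dist (P i) (P j) = 1) :
    ∀ m : ℕ,
      (sierpinskiVertices P m).ncard = 2 * (4 ^ m + 1) ∧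
      (sierpinskiVertices P m \ sierpinskiVertices P 0).ncard = 2 * (4 ^ m - 1) := by
  have hVfin := sier_finite P
  have hPinj : Function.Injective P := by
    intro a b hab
    by_contra h
    have := hreg a b h
    rw [hab] at this
    simp at this
  have hV0 : (sierpinskiVertices P 0).ncard = 4 := by
    show (Set.range P).ncard = 4
    rw [← Set.image_univ, Set.ncard_image_of_injective _ hPinj, Set.ncard_univ]
    simp
  have hmain : ∀ n, (sierpinskiVertices P n).ncard = 2 * (4 ^ n + 1) := by
    intro n
    induction n with
    | zero => simpa using hV0
    | succ n ih =>
      obtain ⟨a, ha⟩ : ∃ a, 4 ^ n = a := ⟨_, rfl⟩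
      set A : Fin 4 → Set (EuclideanSpace ℝ (Fin 3)) :=
        fun i => (fun x => (1/2:ℝ) • (x + P i)) '' sierpinskiVertices P n with hA
      have hAfin : ∀ i, (A i).Finite := fun i => (hVfin n).image _
      have hAcard : ∀ i, (A i).ncard = 2 * (a + 1) := fun i => by
        rw [hA, Set.ncard_image_of_injective _ (sier_f_inj P i), ih, ha]
      have hU : sierpinskiVertices P (n+1) = A 0 ∪ A 1 ∪ A 2 ∪ A 3 := by
        show (⋃ i, A i) = _
        ext x
        simp only [Set.mem_iUnion, Set.mem_union]
        constructor
        · rintro ⟨i, hi⟩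
          fin_cases i
          exacts [Or.inl (Or.inl (Or.inl hi)), Or.inl (Or.inl (Or.inr hi)),
            Or.inl (Or.inr hi), Or.inr hi]
        · rintro (((h | h) | h) | h)
          exacts [⟨0, h⟩, ⟨1, h⟩, ⟨2, h⟩, ⟨3, h⟩]
      have hI : ∀ i j, i ≠ j → A i ∩ A j = {(1/2:ℝ) • (P i + P j)} :=
        fun i j h => sier_inter hreg i j h n
      have h01 : (A 0 ∪ A 1).ncard + 1 = 2 * (a + 1) + 2 * (a + 1) := by
        have hx := Set.ncard_union_add_ncard_inter (A 0) (A 1) (hAfin 0) (hAfin 1)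
        rwa [hI 0 1 (by decide), Set.ncard_singleton, hAcard 0, hAcard 1] at hx
      have h01fin : (A 0 ∪ A 1).Finite := (hAfin 0).union (hAfin 1)
      have h012 : (A 0 ∪ A 1 ∪ A 2).ncard + 2 = (A 0 ∪ A 1).ncard + 2 * (a + 1) := by
        have hx := Set.ncard_union_add_ncard_inter (A 0 ∪ A 1) (A 2) h01fin (hAfin 2)
        have hinter : (A 0 ∪ A 1) ∩ A 2
            = {(1/2:ℝ) • (P 0 + P 2), (1/2:ℝ) • (P 1 + P 2)} := by
          rw [Set.union_inter_distrib_right, hI 0 2 (by decide), hI 1 2 (by decide)]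
          rfl
        rwa [hinter, Set.ncard_pair
          (sier_mid_ne hreg 0 2 1 2 (by decide) (by decide) (by decide) (by decide)),
          hAcard 2] at hx
      have h012fin : (A 0 ∪ A 1 ∪ A 2).Finite := h01fin.union (hAfin 2)
      have h0123 : (A 0 ∪ A 1 ∪ A 2 ∪ A 3).ncard + 3
          = (A 0 ∪ A 1 ∪ A 2).ncard + 2 * (a + 1) := by
        have hx := Set.ncard_union_add_ncard_inter (A 0 ∪ A 1 ∪ A 2) (A 3) h012fin (hAfin 3)
        have hinter : (A 0 ∪ A 1 ∪ A 2) ∩ A 3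
            = {(1/2:ℝ) • (P 0 + P 3), (1/2:ℝ) • (P 1 + P 3), (1/2:ℝ) • (P 2 + P 3)} := by
          rw [Set.union_inter_distrib_right, Set.union_inter_distrib_right,
            hI 0 3 (by decide), hI 1 3 (by decide), hI 2 3 (by decide),
            Set.union_assoc, Set.singleton_union, Set.singleton_union]
        have hcard3 : ({(1/2:ℝ) • (P 0 + P 3), (1/2:ℝ) • (P 1 + P 3),
            (1/2:ℝ) • (P 2 + P 3)} : Set (EuclideanSpace ℝ (Fin 3))).ncard = 3 := by
          rw [Set.ncard_insert_of_notMem ?notmem ((Set.finite_singleton _).insert _),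
            Set.ncard_pair
              (sier_mid_ne hreg 1 3 2 3 (by decide) (by decide) (by decide) (by decide))]
          case notmem =>
            simp only [Set.mem_insert_iff, Set.mem_singleton_iff]
            push_neg
            exact ⟨sier_mid_ne hreg 0 3 1 3 (by decide) (by decide) (by decide) (by decide),
              sier_mid_ne hreg 0 3 2 3 (by decide) (by decide) (by decide) (by decide)⟩
        rwa [hinter, hcard3, hAcard 3] at hx
      rw [hU, pow_succ, ha]
      omega
  intro m
  refine ⟨hmain m, ?_⟩
  obtain ⟨a, ha⟩ : ∃ a, 4 ^ m = a := ⟨_, rfl⟩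
  have ha1 : 1 ≤ a := ha ▸ Nat.one_le_pow _ _ (by norm_num)
  have hdiff := Set.ncard_diff_add_ncard_of_subset (sier_V0_subset P m) (hVfin m)
  have hm := hmain m
  rw [ha] at hm ⊢
  rw [hV0, hm] at hdiff
  omega
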